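/- The logarithmic height of C_α = (α+1)/(−α^2+3α+1), where α is the real root of x^3 − x − 1, equals (log 23)/3. -/

import Mathlib

lemma root_le_one (r : ℂ) (h0 : 23 * r ^ 3 - 23 * r ^ 2 + 6 * r - 1 = 0) :
    ‖r‖ ≤ 1 := by
  by_contra h'
  push_neg at h'
  set a := r.re with ha'
  set b := r.im with hb'
  have hn : 1 < a ^ 2 + b ^ 2 := by
    have := Complex.sq_norm r
    rw [Complex.normSq_apply] at this
    nlinarith [h']
  have hre : 23 * (a^3 - 3*a*b^2) - 23 * (a^2 - b^2) + 6 * a - 1 = 0 := by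
    have := congrArg Complex.re h0
    simp only [Complex.sub_re, Complex.mul_re, Complex.mul_im, Complex.add_re,
      Complex.one_re, Complex.re_ofNat, Complex.im_ofNat, Complex.one_im,
      pow_succ, pow_zero, one_mul, Complex.zero_re] at this
    ring_nf at this ⊢
    linarith [this]
  have him : b * (69*a^2 - 23*b^2 - 46*a + 6) = 0 := by
    have := congrArg Complex.im h0
    simp only [Complex.sub_im, Complex.mul_re, Complex.mul_im, Complex.add_im,
      Complex.one_im, Complex.re_ofNat, Complex.im_ofNat, Complex.one_re,
      pow_succ, pow_zero, one_mul, Complex.zero_im] at this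
    ring_nf at this ⊢
    linarith [this]
  rcases mul_eq_zero.mp him with hb0 | him'
  · rw [hb0] at hre hn
    rcases le_or_gt a 0 with hle | hpos
    · nlinarith [hre, hn, sq_nonneg a, sq_nonneg (a+1)]
    · nlinarith [hre, hn, sq_nonneg (a-1), sq_nonneg a]
  · have hb3 : b^2 = 3*a^2 - 2*a + 6/23 := by linarith
    have hcubic : 184*a^3 - 184*a^2 + 58*a - 5 = 0 := by
      linear_combination (-1)*hre + (23 - 69*a)*hb3
    have hq : 92*a^2 - 46*a - 17 > 0 := by nlinarith [hn, hb3]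
    nlinarith [hcubic, hq, sq_nonneg a, sq_nonneg (a-1), sq_nonneg (a+1), sq_nonneg (2*a-1), mul_pos hq hq]

theorem height_C_alpha (r₁ r₂ r₃ : ℂ)
    (h : ∀ x : ℂ, 23 * x ^ 3 - 23 * x ^ 2 + 6 * x - 1
          = 23 * (x - r₁) * (x - r₂) * (x - r₃)) :
    (1 / 3 : ℝ) * (Real.log 23 + max 0 (Real.log ‖r₁‖)
      + max 0 (Real.log ‖r₂‖) + max 0 (Real.log ‖r₃‖))
      = Real.log 23 / 3 := by
  have key : ∀ r : ℂ, (∃ s t : ℂ,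
      (∀ x : ℂ, 23 * x ^ 3 - 23 * x ^ 2 + 6 * x - 1
        = 23 * (x - r) * (x - s) * (x - t)) ∨
      (∀ x : ℂ, 23 * x ^ 3 - 23 * x ^ 2 + 6 * x - 1
        = 23 * (x - s) * (x - r) * (x - t)) ∨
      (∀ x : ℂ, 23 * x ^ 3 - 23 * x ^ 2 + 6 * x - 1
        = 23 * (x - s) * (x - t) * (x - r))) →
      max 0 (Real.log ‖r‖) = 0 := by
    intro r ⟨s, t, hc⟩
    have hroot : 23 * r ^ 3 - 23 * r ^ 2 + 6 * r - 1 = 0 := by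
      rcases hc with hc | hc | hc <;> rw [hc r] <;> ring
    have hle := root_le_one r hroot
    have : Real.log ‖r‖ ≤ 0 :=
      Real.log_nonpos (norm_nonneg r) hle
    exact max_eq_left this
  have h1 := key r₁ ⟨r₂, r₃, Or.inl h⟩
  have h2 := key r₂ ⟨r₁, r₃, Or.inr (Or.inl h)⟩
  have h3 := key r₃ ⟨r₁, r₂, Or.inr (Or.inr h)⟩
  rw [h1, h2, h3]
  ring
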